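/- Let n ≥ 2, let (a, b) be an open interval containing 0, let C ≥ 0 be a constant, and let f : ℝ → ℂ be infinitely differentiable on (a, b) satisfying |f⁽ⁿ⁾(x)| ≤ C · Σ_{k=0}^{n-1} |f⁽ᵏ⁾(x)| / |x|^{n-k} for all x ∈ (a, b) with x ≠ 0. If f is not identically zero on (a, b), then f has finite vanishing order N at 0 (i.e., there exists N ≥ 0 with f⁽ᴺ⁾(0) ≠ 0 and f⁽ʲ⁾(0) = 0 for all 0 ≤ j < N), and this vanishing order satisfies N ≤ B_n·C + n - 1, where B_n = Σ_{k=0}^{n-1} 1/k!. -/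

import Mathlib

open Filter Topology Set MeasureTheory intervalIntegral

/- Lemma 7 (Pan–Wang): a nontrivial smooth solution of the differential inequality
`‖f⁽ⁿ⁾(x)‖ ≤ C ∑_{k<n} ‖f⁽ᵏ⁾(x)‖/|x|^(n-k)` has finite vanishing order `N` at `0`
with `N ≤ B_n C + n - 1`, where `B_n = ∑_{k<n} 1/k!`. -/

namespace PW

lemma step {u v : ℝ → ℂ} {c K : ℝ} {m : ℕ}
    (hu0 : u 0 = 0)
    (hd : ∀ x ∈ Set.Icc 0 c, HasDerivAt u (v x) x)
    (hv : ContinuousOn v (Set.Icc 0 c))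
    (hb : ∀ x ∈ Set.Icc 0 c, ‖v x‖ ≤ K * x ^ m) :
    ∀ x ∈ Set.Icc 0 c, ‖u x‖ ≤ K / (m + 1) * x ^ (m + 1) := by
  intro x hx
  have hx0 : (0:ℝ) ≤ x := hx.1
  have hsub : Set.Icc 0 x ⊆ Set.Icc 0 c := Set.Icc_subset_Icc le_rfl hx.2
  have huIcc : Set.uIcc (0:ℝ) x = Set.Icc 0 x := Set.uIcc_of_le hx0
  have hvx : ContinuousOn v (Set.Icc 0 x) := hv.mono hsub
  have hint : IntervalIntegrable v volume 0 x := by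
    apply ContinuousOn.intervalIntegrable; rwa [huIcc]
  have heq : u x = ∫ t in (0:ℝ)..x, v t := by
    have h := intervalIntegral.integral_eq_sub_of_hasDerivAt
      (f := u) (f' := v) (a := 0) (b := x)
      (fun t ht => hd t (hsub (huIcc ▸ ht))) hint
    rw [h, hu0, sub_zero]
  have h1 : ‖u x‖ ≤ ∫ t in (0:ℝ)..x, ‖v t‖ := by
    rw [heq]; exact intervalIntegral.norm_integral_le_integral_norm hx0
  have h2 : (∫ t in (0:ℝ)..x, ‖v t‖) ≤ ∫ t in (0:ℝ)..x, K * t ^ m := by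
    apply intervalIntegral.integral_mono_on hx0 _ _ (fun t ht => hb t (hsub ht))
    · apply ContinuousOn.intervalIntegrable; rw [huIcc]; exact hvx.norm
    · apply ContinuousOn.intervalIntegrable
      exact (continuous_const.mul (continuous_pow m)).continuousOn
  have h3 : (∫ t in (0:ℝ)..x, K * t ^ m) = K / (m+1) * x ^ (m+1) := by
    rw [intervalIntegral.integral_const_mul, integral_pow]
    push_cast
    rw [zero_pow (Nat.succ_ne_zero m)]
    ring
  linarith

lemma pow_bound (a b : ℝ) (ha : a < 0) (f : ℝ → ℂ)
    (hsmooth : ∀ k : ℕ, ∀ x ∈ Set.Ioo a b, DifferentiableAt ℝ (iteratedDeriv k f) x)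
    {c : ℝ} (hcb : c < b) :
    ∀ (m j : ℕ), (∀ i, j ≤ i → i < j + m → iteratedDeriv i f 0 = 0) →
    ∃ K, 0 ≤ K ∧ ∀ x ∈ Set.Icc 0 c, ‖iteratedDeriv j f x‖ ≤ K * x ^ m := by
  have hIcc : Set.Icc (0:ℝ) c ⊆ Set.Ioo a b :=
    fun x hx => ⟨lt_of_lt_of_le ha hx.1, lt_of_le_of_lt hx.2 hcb⟩
  have hcont : ∀ k : ℕ, ContinuousOn (iteratedDeriv k f) (Set.Icc 0 c) :=
    fun k x hx => ((hsmooth k x (hIcc hx)).continuousAt).continuousWithinAt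
  have hder : ∀ (k : ℕ), ∀ x ∈ Set.Icc (0:ℝ) c,
      HasDerivAt (iteratedDeriv k f) (iteratedDeriv (k+1) f x) x := by
    intro k x hx
    rw [iteratedDeriv_succ]
    exact (hsmooth k x (hIcc hx)).hasDerivAt
  intro m
  induction m with
  | zero =>
      intro j _
      obtain ⟨K, hK⟩ := (isCompact_Icc).exists_bound_of_continuousOn (hcont j)
      exact ⟨max K 0, le_max_right _ _, fun x hx => by
        rw [pow_zero, mul_one]; exact (hK x hx).trans (le_max_left _ _)⟩
  | succ m ih =>
      intro j h0
      obtain ⟨K, hK0, hK⟩ := ih (j+1) (fun i h1 h2 => h0 i (by omega) (by omega))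
      refine ⟨K / (m+1), by positivity, ?_⟩
      exact step (h0 j le_rfl (by omega)) (hder j) (hcont (j+1)) hK

lemma gronwall (n : ℕ) (hn : 2 ≤ n) (a b : ℝ) (ha : a < 0) (hb : 0 < b)
    (C : ℝ) (hC : 0 ≤ C) (f : ℝ → ℂ)
    (hsmooth : ∀ k : ℕ, ∀ x ∈ Set.Ioo a b, DifferentiableAt ℝ (iteratedDeriv k f) x)
    (hineq : ∀ x ∈ Set.Ioo a b, x ≠ 0 →
      ‖iteratedDeriv n f x‖ ≤ C * ∑ k ∈ Finset.range n, ‖iteratedDeriv k f x‖ / |x| ^ (n - k))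
    (h0 : ∀ j < n, iteratedDeriv j f 0 = 0)
    {c : ℝ} (hc : 0 < c) (hcb : c < b)
    {m : ℕ} {K : ℝ} (hK0 : 0 ≤ K)
    (hm : C * (∑ k ∈ Finset.range n, (1:ℝ) / k.factorial) < m + 1)
    (hbound : ∀ x ∈ Set.Icc 0 c, ‖iteratedDeriv n f x‖ ≤ K * x ^ m) :
    ∀ x ∈ Set.Ioc 0 c, iteratedDeriv n f x = 0 := by
  set B : ℝ := ∑ k ∈ Finset.range n, (1:ℝ) / k.factorial with hB
  have hB0 : 0 ≤ B := Finset.sum_nonneg fun k _ => by positivity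
  have hIcc : Set.Icc (0:ℝ) c ⊆ Set.Ioo a b :=
    fun x hx => ⟨lt_of_lt_of_le ha hx.1, lt_of_le_of_lt hx.2 hcb⟩
  have hcont : ∀ k : ℕ, ContinuousOn (iteratedDeriv k f) (Set.Icc 0 c) :=
    fun k x hx => ((hsmooth k x (hIcc hx)).continuousAt).continuousWithinAt
  have hder : ∀ (k : ℕ), ∀ x ∈ Set.Icc (0:ℝ) c,
      HasDerivAt (iteratedDeriv k f) (iteratedDeriv (k+1) f x) x := by
    intro k x hx
    rw [iteratedDeriv_succ]
    exact (hsmooth k x (hIcc hx)).hasDerivAt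
  set g : ℝ → ℝ := fun t => ‖iteratedDeriv n f t‖ with hg
  have hgcont : ContinuousOn g (Set.Icc 0 c) := (hcont n).norm
  have hgcontIoo : ContinuousOn g (Set.Ioo a b) :=
    fun x hx => ((hsmooth n x hx).continuousAt.norm).continuousWithinAt
  set G : ℝ → ℝ := fun x => ∫ t in (0:ℝ)..x, g t with hGdef
  have hgint : ∀ x ∈ Set.Icc (0:ℝ) c, IntervalIntegrable g volume 0 x := by
    intro x hx
    apply ContinuousOn.intervalIntegrable
    rw [Set.uIcc_of_le hx.1]
    exact hgcont.mono (Set.Icc_subset_Icc le_rfl hx.2)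
  have hGd : ∀ x ∈ Set.Icc (0:ℝ) c, HasDerivAt G (g x) x := by
    intro x hx
    exact intervalIntegral.integral_hasDerivAt_right (hgint x hx)
      (ContinuousOn.stronglyMeasurableAtFilter isOpen_Ioo hgcontIoo x (hIcc hx))
      ((hsmooth n x (hIcc hx)).continuousAt.norm)
  have hGnonneg : ∀ x ∈ Set.Icc (0:ℝ) c, 0 ≤ G x := by
    intro x hx
    exact intervalIntegral.integral_nonneg hx.1 (fun t _ => norm_nonneg _)
  have hGmono : ∀ t ∈ Set.Icc (0:ℝ) c, ∀ x ∈ Set.Icc (0:ℝ) c, t ≤ x → G t ≤ G x := by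
    intro t ht x hx htx
    have h2 : IntervalIntegrable g volume t x := by
      apply ContinuousOn.intervalIntegrable
      rw [Set.uIcc_of_le htx]
      exact hgcont.mono (Set.Icc_subset_Icc ht.1 hx.2)
    have := intervalIntegral.integral_add_adjacent_intervals (hgint t ht) h2
    have hnn : 0 ≤ ∫ s in t..x, g s :=
      intervalIntegral.integral_nonneg htx (fun s _ => norm_nonneg _)
    simp only [hGdef]
    rw [← this]
    linarith
  -- inner bound Q
  have Q : ∀ j, j ≤ n - 1 → ∀ x ∈ Set.Icc (0:ℝ) c,
      ‖iteratedDeriv (n - 1 - j) f x‖ ≤ x ^ j / (j.factorial) * G x := by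
    intro j
    induction j with
    | zero =>
        intro _ x hx
        have hu0 : iteratedDeriv (n-1) f 0 = 0 := h0 (n-1) (by omega)
        have heq : iteratedDeriv (n-1) f x = ∫ t in (0:ℝ)..x, iteratedDeriv n f t := by
          have hd : ∀ t ∈ Set.uIcc (0:ℝ) x,
              HasDerivAt (iteratedDeriv (n-1) f) (iteratedDeriv n f t) t := by
            intro t ht
            rw [Set.uIcc_of_le hx.1] at ht
            have := hder (n-1) t (Set.Icc_subset_Icc le_rfl hx.2 ht)
            rwa [show n - 1 + 1 = n by omega] at this
          have hint : IntervalIntegrable (iteratedDeriv n f) volume 0 x := by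
            apply ContinuousOn.intervalIntegrable
            rw [Set.uIcc_of_le hx.1]
            exact (hcont n).mono (Set.Icc_subset_Icc le_rfl hx.2)
          have h := intervalIntegral.integral_eq_sub_of_hasDerivAt hd hint
          rw [h, hu0, sub_zero]
        simp only [Nat.sub_zero, pow_zero, Nat.factorial_zero, Nat.cast_one, div_one, one_mul]
        rw [heq]
        exact intervalIntegral.norm_integral_le_integral_norm hx.1
    | succ j ih =>
        intro hj x hx
        have hjn : j ≤ n - 1 := by omega
        have harith : n - 1 - (j+1) + 1 = n - 1 - j := by omega
        have hstep := step (u := iteratedDeriv (n-1-(j+1)) f)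
          (v := iteratedDeriv (n-1-j) f) (c := x) (K := G x / j.factorial) (m := j)
          (h0 _ (by omega))
          (fun t ht => by
            have := hder (n-1-(j+1)) t (Set.Icc_subset_Icc le_rfl hx.2 ht)
            rwa [harith] at this)
          ((hcont (n-1-j)).mono (Set.Icc_subset_Icc le_rfl hx.2))
          (fun t ht => by
            have ht' : t ∈ Set.Icc (0:ℝ) c := Set.Icc_subset_Icc le_rfl hx.2 ht
            have h1 := ih hjn t ht'
            have h2 : G t ≤ G x := hGmono t ht' x hx ht.2
            have hT : (0:ℝ) ≤ t ^ j := pow_nonneg ht.1 j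
            have h4 : t ^ j * G t ≤ t ^ j * G x := mul_le_mul_of_nonneg_left h2 hT
            have hfa : (0:ℝ) < (j.factorial:ℝ) := by positivity
            have : t ^ j / (j.factorial : ℝ) * G t ≤ G x / j.factorial * t ^ j := by
              rw [div_mul_eq_mul_div, div_mul_eq_mul_div, mul_comm (G x) (t^j),
                div_le_div_iff₀ hfa hfa]
              nlinarith [mul_le_mul_of_nonneg_right h4 hfa.le]
            linarith)
        have := hstep x ⟨hx.1, le_rfl⟩
        calc ‖iteratedDeriv (n-1-(j+1)) f x‖ ≤ G x / j.factorial / (j+1) * x ^ (j+1) := this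
        _ = x ^ (j+1) / ((j+1).factorial) * G x := by
            rw [Nat.factorial_succ]
            push_cast
            have : (j.factorial : ℝ) ≠ 0 := Nat.cast_ne_zero.mpr j.factorial_ne_zero
            field_simp
  -- main differential inequality for G
  have key : ∀ x ∈ Set.Ioc (0:ℝ) c, g x * x ≤ C * B * G x := by
    intro x hx
    have hx0 : (0:ℝ) < x := hx.1
    have hxI : x ∈ Set.Icc (0:ℝ) c := ⟨hx0.le, hx.2⟩
    have hGx : 0 ≤ G x := hGnonneg x hxI
    have h1 := hineq x (hIcc hxI) hx0.ne'
    rw [abs_of_pos hx0] at h1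
    have hterm : ∀ k ∈ Finset.range n,
        ‖iteratedDeriv k f x‖ / x ^ (n - k) ≤ (1 / ((n-1-k).factorial)) * (G x / x) := by
      intro k hk
      have hkn : k < n := Finset.mem_range.mp hk
      have hQ := Q (n-1-k) (by omega) x hxI
      rw [show n - 1 - (n-1-k) = k by omega] at hQ
      rw [div_le_iff₀ (by positivity)]
      have hp : x ^ (n-k) = x ^ (n-1-k) * x := by
        rw [← pow_succ]
        congr 1
        omega
      calc ‖iteratedDeriv k f x‖ ≤ x ^ (n-1-k) / ((n-1-k).factorial) * G x := hQ
      _ = 1 / ((n-1-k).factorial) * (G x / x) * x ^ (n-k) := by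
          rw [hp]
          have : ((n-1-k).factorial : ℝ) ≠ 0 := Nat.cast_ne_zero.mpr (Nat.factorial_ne_zero _)
          field_simp
    have h2 : (∑ k ∈ Finset.range n, ‖iteratedDeriv k f x‖ / x ^ (n - k))
        ≤ B * (G x / x) := by
      calc _ ≤ ∑ k ∈ Finset.range n, (1 / ((n-1-k).factorial : ℝ)) * (G x / x) :=
            Finset.sum_le_sum hterm
      _ = (∑ k ∈ Finset.range n, (1 / ((n-1-k).factorial : ℝ))) * (G x / x) := by
            rw [Finset.sum_mul]
      _ = B * (G x / x) := by
            rw [hB]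
            congr 1
            exact Finset.sum_range_reflect (fun k => (1:ℝ) / (k.factorial)) n
    have h3 : g x ≤ C * B * (G x / x) := by
      calc g x ≤ C * ∑ k ∈ Finset.range n, ‖iteratedDeriv k f x‖ / x ^ (n - k) := h1
      _ ≤ C * (B * (G x / x)) := by
          apply mul_le_mul_of_nonneg_left h2 hC
      _ = C * B * (G x / x) := by ring
    calc g x * x ≤ C * B * (G x / x) * x := by
          apply mul_le_mul_of_nonneg_right h3 hx0.le
    _ = C * B * G x := by field_simp
  -- weighted function H = G(y) y^(-p)
  intro x hx
  set p : ℝ := C * B with hp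
  set H : ℝ → ℝ := fun y => G y * y ^ (-p) with hH
  have hGcontIoc : ContinuousOn G (Set.Ioc 0 c) := fun y hy =>
    ((hGd y ⟨hy.1.le, hy.2⟩).continuousAt).continuousWithinAt
  have hHcont : ContinuousOn H (Set.Ioc 0 c) := by
    apply hGcontIoc.mul
    intro y hy
    exact (Real.continuousAt_rpow_const y (-p) (Or.inl hy.1.ne')).continuousWithinAt
  have hHderiv : ∀ y ∈ Set.Ioo (0:ℝ) c,
      HasDerivAt H (g y * y ^ (-p) + G y * (-p * y ^ (-p - 1))) y := by
    intro y hy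
    exact (hGd y ⟨hy.1.le, hy.2.le⟩).mul (Real.hasDerivAt_rpow_const (Or.inl hy.1.ne'))
  have hHderiv_nonpos : ∀ y ∈ Set.Ioo (0:ℝ) c, deriv H y ≤ 0 := by
    intro y hy
    rw [(hHderiv y hy).deriv]
    have hy0 : (0:ℝ) < y := hy.1
    have hkey := key y ⟨hy.1, hy.2.le⟩
    have hrp : y ^ (-p) = y ^ (-p - 1) * y := by
      rw [← Real.rpow_add_one hy0.ne' (-p-1)]
      ring_nf
    have hrpos : (0:ℝ) < y ^ (-p - 1) := Real.rpow_pos_of_pos hy0 _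
    have heq2 : g y * y ^ (-p) + G y * (-p * y ^ (-p-1))
        = y ^ (-p-1) * (g y * y - p * G y) := by
      rw [hrp]; ring
    rw [heq2]
    have h5 : g y * y - p * G y ≤ 0 := by linarith
    calc y ^ (-p-1) * (g y * y - p * G y) ≤ y ^ (-p-1) * 0 :=
          mul_le_mul_of_nonneg_left h5 hrpos.le
    _ = 0 := mul_zero _
  have hanti : AntitoneOn H (Set.Ioc 0 c) := by
    apply antitoneOn_of_deriv_nonpos (convex_Ioc 0 c) hHcont
    · intro y hy
      rw [interior_Ioc] at hy
      exact (hHderiv y hy).differentiableAt.differentiableWithinAt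
    · intro y hy
      rw [interior_Ioc] at hy
      exact hHderiv_nonpos y hy
  have hGleK : ∀ y ∈ Set.Icc (0:ℝ) c, G y ≤ K / (m+1) * y ^ (m+1) := by
    intro y hy
    have hint1 := hgint y hy
    have hint2 : IntervalIntegrable (fun t => K * t ^ m) volume 0 y :=
      ((continuous_const.mul (continuous_pow m)).continuousOn).intervalIntegrable
    have h2 : G y ≤ ∫ t in (0:ℝ)..y, K * t ^ m :=
      intervalIntegral.integral_mono_on hy.1 hint1 hint2
        (fun t ht => hbound t (Set.Icc_subset_Icc le_rfl hy.2 ht))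
    have h3 : (∫ t in (0:ℝ)..y, K * t ^ m) = K / (m+1) * y ^ (m+1) := by
      rw [intervalIntegral.integral_const_mul, integral_pow,
        zero_pow (Nat.succ_ne_zero m)]
      push_cast; ring
    linarith
  have hq : (0:ℝ) < (m+1 : ℝ) - p := by rw [hp]; push_cast; linarith
  have htend : Tendsto (fun y : ℝ => K/(m+1) * y ^ ((m+1:ℝ) - p)) (𝓝[>] (0:ℝ)) (𝓝 0) := by
    have h1 : Tendsto (fun y : ℝ => y ^ ((m+1:ℝ) - p)) (𝓝 (0:ℝ)) (𝓝 0) := by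
      have h2 := (Real.continuousAt_rpow_const 0 ((m+1:ℝ) - p) (Or.inr hq.le)).tendsto
      rwa [Real.zero_rpow hq.ne'] at h2
    have h3 : Tendsto (fun y : ℝ => K/(m+1) * y ^ ((m+1:ℝ) - p)) (𝓝[>] (0:ℝ))
        (𝓝 (K/(m+1) * 0)) :=
      (h1.mono_left (nhdsWithin_le_nhds (s := Set.Ioi (0:ℝ)))).const_mul (K/(m+1))
    simpa using h3
  have hev : ∀ᶠ y in 𝓝[>] (0:ℝ), H x ≤ K/(m+1) * y ^ ((m+1:ℝ) - p) := by
    filter_upwards [Ioc_mem_nhdsGT_of_mem (⟨le_rfl, hx.1⟩ : (0:ℝ) ∈ Set.Ico 0 x)]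
      with y hy
    have hyc : y ∈ Set.Ioc (0:ℝ) c := ⟨hy.1, hy.2.trans hx.2⟩
    have h1 : H x ≤ H y := hanti hyc hx hy.2
    have h2 : H y ≤ (K/(m+1) * y ^ (m+1)) * y ^ (-p) :=
      mul_le_mul_of_nonneg_right (hGleK y ⟨hy.1.le, hyc.2⟩) (Real.rpow_nonneg hy.1.le _)
    have h3 : (K/(m+1) * y ^ (m+1)) * y ^ (-p) = K/(m+1) * y ^ ((m+1:ℝ) - p) := by
      rw [show ((m:ℝ)+1) - p = ((m+1:ℕ):ℝ) + (-p) by push_cast; ring,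
        Real.rpow_add hy.1, Real.rpow_natCast]
      ring
    linarith
  have hH0 : H x ≤ 0 := ge_of_tendsto htend hev
  have hHge : 0 ≤ H x := mul_nonneg (hGnonneg x ⟨hx.1.le, hx.2⟩) (Real.rpow_nonneg hx.1.le _)
  have hGx0 : G x = 0 := by
    have hxp : (0:ℝ) < x ^ (-p) := Real.rpow_pos_of_pos hx.1 _
    have h6 : G x * x ^ (-p) = 0 := le_antisymm hH0 hHge
    rcases mul_eq_zero.mp h6 with h | h
    · exact h
    · exact absurd h hxp.ne'
  have hkx := key x hx
  rw [hGx0, mul_zero] at hkx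
  have hgx : g x = 0 := by nlinarith [norm_nonneg (iteratedDeriv n f x), hx.1]
  exact norm_eq_zero.mp hgx

lemma zero_at_zero {h : ℝ → ℂ} (hcont : ContinuousAt h 0) {c : ℝ} (hc : 0 < c)
    (hz : ∀ y ∈ Set.Ioo (0:ℝ) c, h y = 0) : h 0 = 0 := by
  have t1 : Tendsto h (𝓝[>] (0:ℝ)) (𝓝 (h 0)) :=
    hcont.tendsto.mono_left nhdsWithin_le_nhds
  have t2 : Tendsto h (𝓝[>] (0:ℝ)) (𝓝 0) := by
    have hev : h =ᶠ[𝓝[>] (0:ℝ)] fun _ => 0 := by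
      filter_upwards [Ioo_mem_nhdsGT_of_mem (⟨le_rfl, hc⟩ : (0:ℝ) ∈ Set.Ico 0 c)]
        with y hy using hz y hy
    exact (Filter.tendsto_congr' hev).mpr tendsto_const_nhds
  exact tendsto_nhds_unique t1 t2

/-- Part 1: if all derivatives vanish at 0 then f vanishes on [0, b). -/

lemma zero_right (n : ℕ) (hn : 2 ≤ n) (a b : ℝ) (ha : a < 0) (hb : 0 < b)
    (C : ℝ) (hC : 0 ≤ C) (f : ℝ → ℂ)
    (hsmooth : ∀ k : ℕ, ∀ x ∈ Set.Ioo a b, DifferentiableAt ℝ (iteratedDeriv k f) x)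
    (hineq : ∀ x ∈ Set.Ioo a b, x ≠ 0 →
      ‖iteratedDeriv n f x‖ ≤ C * ∑ k ∈ Finset.range n, ‖iteratedDeriv k f x‖ / |x| ^ (n - k))
    (hall : ∀ j, iteratedDeriv j f 0 = 0) :
    ∀ x ∈ Set.Ico 0 b, f x = 0 := by
  intro x hx
  rcases eq_or_lt_of_le hx.1 with h | hx0
  · rw [← h, ← iteratedDeriv_zero (f := f)]; exact hall 0
  · set c := x with hcdef
    have hc : 0 < c := hx0
    have hcb : c < b := hx.2
    have hIcc : Set.Icc (0:ℝ) c ⊆ Set.Ioo a b :=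
      fun y hy => ⟨lt_of_lt_of_le ha hy.1, lt_of_le_of_lt hy.2 hcb⟩
    have hcont : ∀ k : ℕ, ContinuousOn (iteratedDeriv k f) (Set.Icc 0 c) :=
      fun k y hy => ((hsmooth k y (hIcc hy)).continuousAt).continuousWithinAt
    have hder : ∀ (k : ℕ), ∀ y ∈ Set.Icc (0:ℝ) c,
        HasDerivAt (iteratedDeriv k f) (iteratedDeriv (k+1) f y) y := by
      intro k y hy
      rw [iteratedDeriv_succ]
      exact (hsmooth k y (hIcc hy)).hasDerivAt
    set B : ℝ := ∑ k ∈ Finset.range n, (1:ℝ) / k.factorial with hB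
    obtain ⟨m, hm⟩ := exists_nat_gt (C * B)
    have hm' : C * B < m + 1 := hm.trans (by linarith)
    obtain ⟨K, hK0, hK⟩ := pow_bound a b ha f hsmooth hcb m n
      (fun i h1 h2 => hall i)
    have hzn : ∀ y ∈ Set.Ioc (0:ℝ) c, iteratedDeriv n f y = 0 :=
      gronwall n hn a b ha hb C hC f hsmooth hineq (fun j _ => hall j) hc hcb hK0 hm' hK
    have hznIcc : ∀ y ∈ Set.Icc (0:ℝ) c, iteratedDeriv n f y = 0 := by
      intro y hy
      rcases eq_or_lt_of_le hy.1 with h | h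
      · rw [← h]; exact hall n
      · exact hzn y ⟨h, hy.2⟩
    -- downward induction
    have hdown : ∀ i, i ≤ n → ∀ y ∈ Set.Icc (0:ℝ) c, iteratedDeriv (n - i) f y = 0 := by
      intro i
      induction i with
      | zero => intro _ y hy; simpa using hznIcc y hy
      | succ i ih =>
          intro hi y hy
          have harith : n - (i+1) + 1 = n - i := by omega
          have hstep := step (u := iteratedDeriv (n-(i+1)) f)
            (v := iteratedDeriv (n-i) f) (c := c) (K := 0) (m := 0)
            (hall _)
            (fun t ht => by
              have := hder (n-(i+1)) t ht
              rwa [harith] at this)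
            (hcont (n-i))
            (fun t ht => by
              rw [ih (by omega) t ht]
              simp)
          have := hstep y hy
          simp only [zero_div, zero_mul] at this
          exact norm_le_zero_iff.mp this
    have := hdown n le_rfl x ⟨hx0.le, le_rfl⟩
    simpa using this

/-- Part 2: vanishing up to a large order N forces the N-th derivative to vanish too. -/

lemma high_vanish (n : ℕ) (hn : 2 ≤ n) (a b : ℝ) (ha : a < 0) (hb : 0 < b)
    (C : ℝ) (hC : 0 ≤ C) (f : ℝ → ℂ)
    (hsmooth : ∀ k : ℕ, ∀ x ∈ Set.Ioo a b, DifferentiableAt ℝ (iteratedDeriv k f) x)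
    (hineq : ∀ x ∈ Set.Ioo a b, x ≠ 0 →
      ‖iteratedDeriv n f x‖ ≤ C * ∑ k ∈ Finset.range n, ‖iteratedDeriv k f x‖ / |x| ^ (n - k))
    (N : ℕ) (hNn : n ≤ N) (h0 : ∀ j < N, iteratedDeriv j f 0 = 0)
    (hNb : C * (∑ k ∈ Finset.range n, (1:ℝ) / k.factorial) + n - 1 < N) :
    iteratedDeriv N f 0 = 0 := by
  set c := b / 2 with hcdef
  have hc : 0 < c := by positivity
  have hcb : c < b := by simp [hcdef]; linarith
  have hIcc : Set.Icc (0:ℝ) c ⊆ Set.Ioo a b :=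
    fun y hy => ⟨lt_of_lt_of_le ha hy.1, lt_of_le_of_lt hy.2 hcb⟩
  have hm' : C * (∑ k ∈ Finset.range n, (1:ℝ) / k.factorial) < (N - n : ℕ) + 1 := by
    have : ((N - n : ℕ) : ℝ) = (N : ℝ) - n := by
      push_cast [Nat.cast_sub hNn]; ring
    rw [this]
    linarith
  obtain ⟨K, hK0, hK⟩ := pow_bound a b ha f hsmooth hcb (N - n) n
    (fun i h1 h2 => h0 i (by omega))
  have hzn : ∀ y ∈ Set.Ioc (0:ℝ) c, iteratedDeriv n f y = 0 :=
    gronwall n hn a b ha hb C hC f hsmooth hineq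
      (fun j hj => h0 j (by omega)) hc hcb hK0 hm' hK
  -- upward propagation on Ioo 0 c, then at 0 by continuity
  have hup : ∀ j, ∀ y ∈ Set.Ioo (0:ℝ) c, iteratedDeriv (n + j) f y = 0 := by
    intro j
    induction j with
    | zero => intro y hy; exact hzn y ⟨hy.1, hy.2.le⟩
    | succ j ih =>
        intro y hy
        rw [show n + (j+1) = (n+j) + 1 by omega, iteratedDeriv_succ]
        have hev : iteratedDeriv (n+j) f =ᶠ[𝓝 y] fun _ => 0 := by
          filter_upwards [isOpen_Ioo.mem_nhds hy] with t ht using ih t ht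
        rw [hev.deriv_eq]
        exact deriv_const y 0
  have hupz : ∀ j, iteratedDeriv (n + j) f 0 = 0 := by
    intro j
    apply zero_at_zero _ hc (hup j)
    exact (hsmooth (n+j) 0 ⟨ha, hb⟩).continuousAt
  have := hupz (N - n)
  rwa [show n + (N - n) = N by omega] at this

end PW

theorem finite_vanishing_order_bound
    (n : ℕ) (hn : 2 ≤ n) (a b : ℝ) (ha : a < 0) (hb : 0 < b)
    (C : ℝ) (hC : 0 ≤ C) (f : ℝ → ℂ)
    (hsmooth : ∀ k : ℕ, ∀ x ∈ Set.Ioo a b, DifferentiableAt ℝ (iteratedDeriv k f) x)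
    (hineq : ∀ x ∈ Set.Ioo a b, x ≠ 0 →
      ‖iteratedDeriv n f x‖ ≤ C * ∑ k ∈ Finset.range n, ‖iteratedDeriv k f x‖ / |x| ^ (n - k))
    (hne : ∃ x ∈ Set.Ioo a b, f x ≠ 0) :
    ∃ N : ℕ, iteratedDeriv N f 0 ≠ 0 ∧ (∀ j < N, iteratedDeriv j f 0 = 0) ∧
      (N : ℝ) ≤ (∑ k ∈ Finset.range n, (1 : ℝ) / k.factorial) * C + n - 1 := by
  classical
  set B : ℝ := ∑ k ∈ Finset.range n, (1:ℝ) / k.factorial with hB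
  have hB0 : 0 ≤ B := Finset.sum_nonneg fun k _ => by positivity
  have hex : ∃ N, iteratedDeriv N f 0 ≠ 0 := by
    by_contra hcon
    push_neg at hcon
    obtain ⟨x₀, hx₀, hfx₀⟩ := hne
    rcases le_or_gt 0 x₀ with h | h
    · exact hfx₀ (PW.zero_right n hn a b ha hb C hC f hsmooth hineq hcon x₀ ⟨h, hx₀.2⟩)
    · have hsg : ∀ k : ℕ, ∀ x ∈ Set.Ioo (-b) (-a),
          DifferentiableAt ℝ (iteratedDeriv k (fun y => f (-y))) x := by
        intro k x hx
        have heq : iteratedDeriv k (fun y => f (-y))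
            = fun y => (-1:ℝ)^k • iteratedDeriv k f (-y) :=
          funext (iteratedDeriv_comp_neg k f)
        rw [heq]
        have h1 : DifferentiableAt ℝ (iteratedDeriv k f) (-x) :=
          hsmooth k (-x) ⟨by linarith [hx.2], by linarith [hx.1]⟩
        have h2 : DifferentiableAt ℝ (fun y : ℝ => iteratedDeriv k f (-y)) x :=
          h1.comp x (differentiable_neg x)
        exact h2.const_smul ((-1:ℝ)^k)
      have hnorm : ∀ (k : ℕ) (x : ℝ),
          ‖iteratedDeriv k (fun y => f (-y)) x‖ = ‖iteratedDeriv k f (-x)‖ := by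
        intro k x
        rw [iteratedDeriv_comp_neg, norm_smul]
        simp
      have hiqg : ∀ x ∈ Set.Ioo (-b) (-a), x ≠ 0 →
          ‖iteratedDeriv n (fun y => f (-y)) x‖ ≤
            C * ∑ k ∈ Finset.range n,
              ‖iteratedDeriv k (fun y => f (-y)) x‖ / |x| ^ (n - k) := by
        intro x hx hx0
        have hmem : -x ∈ Set.Ioo a b := ⟨by linarith [hx.2], by linarith [hx.1]⟩
        have h1 := hineq (-x) hmem (neg_ne_zero.mpr hx0)
        rw [hnorm n x, show (∑ k ∈ Finset.range n,
            ‖iteratedDeriv k (fun y => f (-y)) x‖ / |x| ^ (n - k))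
            = ∑ k ∈ Finset.range n, ‖iteratedDeriv k f (-x)‖ / |(-x)| ^ (n - k) from
          Finset.sum_congr rfl (fun k _ => by rw [hnorm, abs_neg])]
        exact h1
      have hallg : ∀ j, iteratedDeriv j (fun y => f (-y)) 0 = 0 := by
        intro j
        rw [iteratedDeriv_comp_neg, neg_zero, hcon j, smul_zero]
      have := PW.zero_right n hn (-b) (-a) (by linarith) (by linarith) C hC
        (fun y => f (-y)) hsg hiqg hallg (-x₀) ⟨by linarith, by linarith [hx₀.1]⟩
      simp only [neg_neg] at this
      exact hfx₀ this
  refine ⟨Nat.find hex, Nat.find_spec hex,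
    fun j hj => not_not.mp (Nat.find_min hex hj), ?_⟩
  by_contra hgt
  push_neg at hgt
  have hBC : 0 ≤ B * C := mul_nonneg hB0 hC
  have hNn : n ≤ Nat.find hex := by
    have h3 : (n:ℝ) < (Nat.find hex : ℝ) + 1 := by linarith
    have h4 : n < Nat.find hex + 1 := by exact_mod_cast h3
    omega
  have := PW.high_vanish n hn a b ha hb C hC f hsmooth hineq (Nat.find hex) hNn
    (fun j hj => not_not.mp (Nat.find_min hex hj)) (by rw [mul_comm]; linarith)
  exact (Nat.find_spec hex) this
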